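/- arXiv:1502.07229 — 3 statements merged into one kernel-verified Lean document; each statement's English description precedes it below -/
import Mathlib

section
/- Let H be a real Hilbert space, K : ℕ → H, and y : ℕ → ℝ with |y_i| ≤ M and ‖K_{t,j}‖ ≤ κ for all indices, where K_{t,j} ∈ H. Define f_1 = f_2 = 0 and for t ≥ 2, f_{t+1} = f_t - (γ_t/(t-1)) ∑_{j=1}^{t-1} (⟨f_t, K_{t,j}⟩ - y_t + y_j) K_{t,j}, with γ_t κ² ≤ 1. Then for every t, ‖f_t‖ ≤ 2M √(∑_{j=2}^{t-1} γ_j). -/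
open scoped BigOperators RealInnerProductSpace

theorem stmt4 {H : Type*} [NormedAddCommGroup H] [InnerProductSpace ℝ H]
    (M κ : ℝ) (K : ℕ → ℕ → H) (y : ℕ → ℝ) (γ : ℕ → ℝ)
    (hK : ∀ t j, ‖K t j‖ ≤ κ) (hy : ∀ i, |y i| ≤ M)
    (hγpos : ∀ t, 0 < γ t) (hγκ : ∀ t, γ t * κ ^ 2 ≤ 1)
    (f : ℕ → H) (hf1 : f 1 = 0) (hf2 : f 2 = 0)
    (hrec : ∀ t, 2 ≤ t →
      f (t + 1) = f t - (γ t / ((t : ℝ) - 1)) •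
        ∑ j ∈ Finset.Icc 1 (t - 1), ((⟪f t, K t j⟫ : ℝ) - y t + y j) • K t j) :
    ∀ t, 1 ≤ t → ‖f t‖ ≤ 2 * M * Real.sqrt (∑ j ∈ Finset.Icc 2 (t - 1), γ j) := by
  have hκ0 : 0 ≤ κ := le_trans (norm_nonneg _) (hK 0 0)
  have hM0 : 0 ≤ M := le_trans (abs_nonneg _) (hy 0)
  -- key one-step estimate
  have key : ∀ t, 2 ≤ t → ‖f (t+1)‖^2 ≤ ‖f t‖^2 + 4*M^2 * γ t := by
    intro t ht
    set s := Finset.Icc 1 (t-1) with hs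
    set a : ℕ → ℝ := fun j => (⟪f t, K t j⟫ : ℝ) - y t + y j with ha
    set g : H := ∑ j ∈ s, a j • K t j with hg
    have hcard : (s.card : ℝ) = (t:ℝ) - 1 := by
      rw [hs, Nat.card_Icc]
      have : t - 1 + 1 - 1 = t - 1 := by omega
      rw [this, Nat.cast_sub (by omega)]
      simp
    have htpos : (0:ℝ) < (t:ℝ) - 1 := by
      have : (2:ℝ) ≤ (t:ℝ) := by exact_mod_cast ht
      linarith
    set c : ℝ := γ t / ((t:ℝ) - 1) with hc
    have hcpos : 0 < c := div_pos (hγpos t) htpos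
    have hrw : f (t+1) = f t - c • g := hrec t ht
    have hexp : ‖f (t+1)‖^2 = ‖f t‖^2 - 2 * (c * ∑ j ∈ s, a j * ⟪f t, K t j⟫) + c^2 * ‖g‖^2 := by
      rw [hrw, @norm_sub_sq_real, real_inner_smul_right, inner_sum]
      simp only [real_inner_smul_right]
      rw [norm_smul, mul_pow]
      congr 2
      rw [Real.norm_eq_abs, abs_of_pos hcpos]
    -- bound ‖g‖^2
    have hgnorm : ‖g‖ ≤ κ * ∑ j ∈ s, |a j| := by
      calc ‖g‖ ≤ ∑ j ∈ s, ‖a j • K t j‖ := norm_sum_le _ _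
        _ ≤ ∑ j ∈ s, κ * |a j| := by
            apply Finset.sum_le_sum
            intro j _
            rw [norm_smul, Real.norm_eq_abs, mul_comm]
            exact mul_le_mul_of_nonneg_right (hK t j) (abs_nonneg _)
        _ = κ * ∑ j ∈ s, |a j| := by rw [Finset.mul_sum]
    have hgsq : ‖g‖^2 ≤ κ^2 * ((s.card : ℝ) * ∑ j ∈ s, (a j)^2) := by
      have h1 : ‖g‖^2 ≤ (κ * ∑ j ∈ s, |a j|)^2 := by
        apply sq_le_sq' _ hgnorm
        have : 0 ≤ κ * ∑ j ∈ s, |a j| := by positivity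
        linarith [norm_nonneg g]
      have h2 : (∑ j ∈ s, |a j|)^2 ≤ (s.card : ℝ) * ∑ j ∈ s, |a j|^2 := by
        have := sq_sum_le_card_mul_sum_sq (s := s) (f := fun j => |a j|)
        exact_mod_cast this
      have h3 : ∑ j ∈ s, |a j|^2 = ∑ j ∈ s, (a j)^2 := by
        simp [sq_abs]
      calc ‖g‖^2 ≤ (κ * ∑ j ∈ s, |a j|)^2 := h1
        _ = κ^2 * (∑ j ∈ s, |a j|)^2 := by ring
        _ ≤ κ^2 * ((s.card : ℝ) * ∑ j ∈ s, (a j)^2) := by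
            rw [← h3]; exact mul_le_mul_of_nonneg_left h2 (by positivity)
    -- per-term bound
    have hper : ∀ j ∈ s, γ t * κ^2 * (a j)^2 - 2 * (a j * ⟪f t, K t j⟫) ≤ 4 * M^2 := by
      intro j _
      have hd : |y j - y t| ≤ 2 * M := by
        have := hy j; have := hy t
        have h := abs_sub (y j) (y t)
        calc |y j - y t| ≤ |y j| + |y t| := abs_sub _ _
          _ ≤ 2 * M := by linarith [hy j, hy t]
      have hdsq : (y j - y t)^2 ≤ (2*M)^2 := sq_le_sq' (by linarith [abs_le.mp hd]) (abs_le.mp hd).2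
      have hγκ' := hγκ t
      have hγ' := (hγpos t).le
      have hS : (⟪f t, K t j⟫ : ℝ) = a j - (y j - y t) := by rw [ha]; ring
      rw [hS]
      nlinarith [hdsq, sq_nonneg (a j - (y j - y t)),
        mul_nonneg (sub_nonneg.2 hγκ') (sq_nonneg (a j))]
    -- combine
    have hsum : ∑ j ∈ s, (γ t * κ^2 * (a j)^2 - 2 * (a j * ⟪f t, K t j⟫)) ≤ (s.card : ℝ) * (4 * M^2) := by
      calc ∑ j ∈ s, (γ t * κ^2 * (a j)^2 - 2 * (a j * ⟪f t, K t j⟫))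
          ≤ ∑ j ∈ s, 4 * M^2 := Finset.sum_le_sum hper
        _ = (s.card : ℝ) * (4 * M^2) := by rw [Finset.sum_const, nsmul_eq_mul]
    have hcmul : c * ((t:ℝ) - 1) = γ t := div_mul_cancel₀ _ (ne_of_gt htpos)
    rw [hexp]
    have hstep : c^2 * ‖g‖^2 ≤ c * (γ t * κ^2 * ∑ j ∈ s, (a j)^2) := by
      calc c^2 * ‖g‖^2 ≤ c^2 * (κ^2 * (((t:ℝ)-1) * ∑ j ∈ s, (a j)^2)) := by
            rw [← hcard]; exact mul_le_mul_of_nonneg_left hgsq (by positivity)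
        _ = c * (γ t * κ^2 * ∑ j ∈ s, (a j)^2) := by
            rw [← hcmul]; ring
    have hsplit : ∑ j ∈ s, (γ t * κ^2 * (a j)^2 - 2 * (a j * ⟪f t, K t j⟫))
        = γ t * κ^2 * (∑ j ∈ s, (a j)^2) - 2 * ∑ j ∈ s, a j * ⟪f t, K t j⟫ := by
      rw [Finset.sum_sub_distrib, ← Finset.mul_sum, ← Finset.mul_sum]
    rw [hsplit] at hsum
    have h5 : c * ((s.card : ℝ) * (4 * M ^ 2)) = 4 * M ^ 2 * γ t := by
      rw [hcard, ← hcmul]; ring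
    have h6 := mul_le_mul_of_nonneg_left hsum hcpos.le
    rw [h5] at h6
    nlinarith [h6, hstep]
  -- squared bound by induction
  have sqb : ∀ t, 1 ≤ t → ‖f t‖^2 ≤ 4*M^2 * ∑ j ∈ Finset.Icc 2 (t-1), γ j := by
    intro t
    induction t with
    | zero => omega
    | succ n ih =>
      intro _
      match n, ih with
      | 0, _ => simp [hf1]
      | 1, _ => simp [hf2]
      | (m+2), ih =>
        have hsum : ∑ j ∈ Finset.Icc 2 (m+2+1-1), γ j
            = ∑ j ∈ Finset.Icc 2 (m+2-1), γ j + γ (m+2) := by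
          have : m+2+1-1 = (m+1) + 1 := by omega
          rw [this, Finset.sum_Icc_succ_top (by omega)]
          congr 1
        have h1 := key (m+2) (by omega)
        have h2 := ih (by omega)
        rw [hsum]
        calc ‖f (m+2+1)‖^2 ≤ ‖f (m+2)‖^2 + 4*M^2 * γ (m+2) := h1
          _ ≤ 4*M^2 * ∑ j ∈ Finset.Icc 2 (m+2-1), γ j + 4*M^2 * γ (m+2) := by linarith
          _ = 4*M^2 * (∑ j ∈ Finset.Icc 2 (m+2-1), γ j + γ (m+2)) := by ring
  intro t ht
  have h := sqb t ht
  have hS : 0 ≤ ∑ j ∈ Finset.Icc 2 (t-1), γ j :=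
    Finset.sum_nonneg fun j _ => (hγpos j).le
  calc ‖f t‖ = Real.sqrt (‖f t‖^2) := (Real.sqrt_sq (norm_nonneg _)).symm
    _ ≤ Real.sqrt (4*M^2 * ∑ j ∈ Finset.Icc 2 (t-1), γ j) := Real.sqrt_le_sqrt h
    _ = 2 * M * Real.sqrt (∑ j ∈ Finset.Icc 2 (t-1), γ j) := by
        rw [Real.sqrt_mul (by positivity)]
        congr 1
        rw [show (4:ℝ)*M^2 = (2*M)^2 by ring, Real.sqrt_sq (by positivity)]
end

section
/- Let G be a Mercer kernel on X with RKHS H_G, and suppose the constant function 1_X is not in H_G. Let K be the pairwise kernel K((x¹,x²),(x̂¹,x̂²)) = ⟨G_{x¹} − G_{x²}, G_{x̂¹} − G_{x̂²}⟩_G with RKHS H_K. Then the map ℑ : H_G → H_K defined by ℑ(g)(x¹,x²) = g(x¹) − g(x²) is a bijection, and ‖ℑ(g)‖_K = ‖g‖_G for every g ∈ H_G. -/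
open scoped RealInnerProductSpace

open Submodule LinearMap in
/-- Auxiliary: given two feature maps with the same Gram matrix and both spanning dense
subspaces, there is a linear isometry equivalence matching them up. -/
theorem kernelEquiv_exists {A HG HK : Type*}
    [NormedAddCommGroup HG] [InnerProductSpace ℝ HG] [CompleteSpace HG]
    [NormedAddCommGroup HK] [InnerProductSpace ℝ HK] [CompleteSpace HK]
    (D : A → HG) (k : A → HK)
    (hDdense : (Submodule.span ℝ (Set.range D)).topologicalClosure = ⊤)
    (hKdense : (Submodule.span ℝ (Set.range k)).topologicalClosure = ⊤)
    (hker : ∀ p q : A, (⟪k p, k q⟫ : ℝ) = ⟪D p, D q⟫) :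
    ∃ E : HK ≃ₗᵢ[ℝ] HG, ∀ p : A, E (k p) = D p := by
  classical
  set L1 : (A →₀ ℝ) →ₗ[ℝ] HK := Finsupp.linearCombination ℝ k with hL1
  set L2 : (A →₀ ℝ) →ₗ[ℝ] HG := Finsupp.linearCombination ℝ D with hL2
  have key : ∀ f g : A →₀ ℝ, (⟪L1 f, L1 g⟫ : ℝ) = ⟪L2 f, L2 g⟫ := by
    intro f g
    rw [hL1, hL2, Finsupp.linearCombination_apply, Finsupp.linearCombination_apply,
      Finsupp.linearCombination_apply, Finsupp.linearCombination_apply, Finsupp.sum,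
      Finsupp.sum, Finsupp.sum, Finsupp.sum, sum_inner, sum_inner]
    refine Finset.sum_congr rfl fun p _ => ?_
    rw [inner_sum, inner_sum]
    refine Finset.sum_congr rfl fun q _ => ?_
    rw [real_inner_smul_left, real_inner_smul_left, real_inner_smul_right,
      real_inner_smul_right, hker]
  have hle : LinearMap.ker L1 ≤ LinearMap.ker L2 := by
    intro f hf
    rw [LinearMap.mem_ker] at hf ⊢
    have := key f f
    rw [hf, inner_zero_left] at this
    exact inner_self_eq_zero.mp this.symm
  set S : Submodule ℝ HK := LinearMap.range L1 with hS
  have hSd : S.topologicalClosure = ⊤ := by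
    rw [hS, hL1, Finsupp.range_linearCombination]; exact hKdense
  set T0 : S →ₗ[ℝ] HG :=
    ((LinearMap.ker L1).liftQ L2 hle).comp (L1.quotKerEquivRange.symm : S →ₗ[ℝ] _) with hT0
  have hT0app : ∀ f : A →₀ ℝ, ∀ h, T0 ⟨L1 f, h⟩ = L2 f := by
    intro f h
    have : L1.quotKerEquivRange.symm ⟨L1 f, h⟩ = Submodule.Quotient.mk f := by
      rw [LinearEquiv.symm_apply_eq]
      exact Subtype.ext (L1.quotKerEquivRange_apply_mk f)
    simp [hT0, this]
  have hT0inner : ∀ u v : S, (⟪T0 u, T0 v⟫ : ℝ) = ⟪(u : HK), (v : HK)⟫ := by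
    rintro ⟨u, hu⟩ ⟨v, hv⟩
    obtain ⟨f, rfl⟩ := hu
    obtain ⟨g, rfl⟩ := hv
    refine (congrArg₂ (fun a b => (⟪a, b⟫ : ℝ)) (hT0app f _) (hT0app g _)).trans ?_
    exact (key f g).symm
  have hT0norm : ∀ u : S, ‖T0 u‖ = ‖u‖ := by
    intro u
    have := hT0inner u u
    rw [real_inner_self_eq_norm_sq, real_inner_self_eq_norm_sq] at this
    show ‖T0 u‖ = ‖(u : HK)‖
    rw [← Real.sqrt_sq (norm_nonneg (T0 u)), ← Real.sqrt_sq (norm_nonneg ((u : HK))), this]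
  set T0' : S →ₗᵢ[ℝ] HG := ⟨T0, hT0norm⟩ with hT0'
  have hdense : DenseRange (S.subtypeL : S →L[ℝ] HK) := by
    rw [denseRange_iff_closure_range]
    have h1 : Set.range (S.subtypeL : S →L[ℝ] HK) = (S : Set HK) := Subtype.range_coe
    rw [h1]
    have := congrArg (fun W : Submodule ℝ HK => (W : Set HK)) hSd
    simpa [Submodule.topologicalClosure_coe] using this
  have hind : IsUniformInducing (S.subtypeL : S →L[ℝ] HK) := isUniformEmbedding_subtype_val.1
  set T : HK →L[ℝ] HG :=
    (T0'.toContinuousLinearMap).extend (S.subtypeL) with hT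
  have hTeq : ∀ u : S, T u = T0 u := by
    intro u
    exact ContinuousLinearMap.extend_eq _ hdense hind u
  have hTnorm : ∀ v : HK, ‖T v‖ = ‖v‖ := by
    have hclosed : IsClosed {v : HK | ‖T v‖ = ‖v‖} :=
      isClosed_eq (T.continuous.norm) continuous_norm
    intro v
    refine hdense.induction_on v hclosed fun u => ?_
    show ‖T u‖ = ‖(u : HK)‖
    rw [hTeq u, hT0norm]
    rfl
  set Ti : HK →ₗᵢ[ℝ] HG := ⟨T.toLinearMap, hTnorm⟩ with hTi
  have hTk : ∀ p : A, Ti (k p) = D p := by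
    intro p
    have hLf : L1 (Finsupp.single p 1) = k p := by simp [hL1]
    have hk : k p ∈ S := ⟨_, hLf⟩
    have e1 : (⟨k p, hk⟩ : S) = ⟨L1 (Finsupp.single p 1), ⟨Finsupp.single p 1, rfl⟩⟩ :=
      Subtype.ext hLf.symm
    have : Ti (k p) = T0 ⟨k p, hk⟩ := hTeq ⟨k p, hk⟩
    rw [this, e1]; refine (hT0app _ _).trans ?_
    simp [hL2]
  have hsurj : Function.Surjective Ti := by
    have hclosed : IsClosed (Set.range Ti) := Ti.isometry.isClosedEmbedding.isClosed_range
    have hsub : (Submodule.span ℝ (Set.range D) : Set HG) ⊆ Set.range Ti := by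
      have hr : Set.range D ⊆ Set.range Ti := by
        rintro _ ⟨p, rfl⟩
        exact ⟨k p, hTk p⟩
      have hrs : Set.range Ti = ((LinearMap.range Ti.toLinearMap : Submodule ℝ HG) : Set HG) := by
        ext x; simp [LinearMap.mem_range]
      rw [hrs]
      exact Submodule.span_le.mpr (by rw [← hrs]; exact hr)
    have hdense2 : Dense (Submodule.span ℝ (Set.range D) : Set HG) := by
      rw [dense_iff_closure_eq]
      have := congrArg (fun W : Submodule ℝ HG => (W : Set HG)) hDdense
      simpa [Submodule.topologicalClosure_coe] using this
    intro g
    have hg : g ∈ closure (Set.range Ti) := closure_mono hsub (hdense2 g)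
    rwa [hclosed.closure_eq] at hg
  refine ⟨LinearIsometryEquiv.ofSurjective Ti hsurj, fun p => ?_⟩
  show Ti (k p) = D p
  exact hTk p

/-- RKHSs are modeled abstractly: `HG` is a Hilbert space with feature map `G : X → HG`
whose kernel sections span a dense subspace, an element `g : HG` representing the
function `x ↦ ⟪G x, g⟫` (reproducing property); similarly `HK` with feature map
`k : X × X → HK` for the pairwise kernel
`K((x¹,x²),(x̂¹,x̂²)) = ⟪G x¹ − G x², G x̂¹ − G x̂²⟫`. The hypothesis `hone` says that
the constant function `1_X` is not in `H_G`. -/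
theorem stmt6 {X HG HK : Type*}
    [NormedAddCommGroup HG] [InnerProductSpace ℝ HG] [CompleteSpace HG]
    [NormedAddCommGroup HK] [InnerProductSpace ℝ HK] [CompleteSpace HK]
    (G : X → HG) (k : X × X → HK)
    (hGdense : (Submodule.span ℝ (Set.range G)).topologicalClosure = ⊤)
    (hKdense : (Submodule.span ℝ (Set.range k)).topologicalClosure = ⊤)
    (hker : ∀ p q : X × X, (⟪k p, k q⟫ : ℝ) = ⟪G p.1 - G p.2, G q.1 - G q.2⟫)
    (hone : ¬ ∃ g : HG, ∀ x : X, (⟪G x, g⟫ : ℝ) = 1) :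
    ∃ ℑ : HG → HK,
      (∀ (g : HG) (p : X × X), (⟪k p, ℑ g⟫ : ℝ) = ⟪G p.1, g⟫ - ⟪G p.2, g⟫) ∧
        Function.Bijective ℑ ∧ ∀ g : HG, ‖ℑ g‖ = ‖g‖ := by
  have hX : Nonempty X := by
    by_contra h
    exact hone ⟨0, fun x => absurd ⟨x⟩ h⟩
  obtain ⟨x₀⟩ := hX
  set D : X × X → HG := fun p => G p.1 - G p.2 with hD
  have hDdense : (Submodule.span ℝ (Set.range D)).topologicalClosure = ⊤ := by
    rw [Submodule.topologicalClosure_eq_top_iff]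
    rw [Submodule.eq_bot_iff]
    intro g hg
    have hdiff : ∀ x y : X, (⟪G x - G y, g⟫ : ℝ) = 0 := fun x y =>
      hg _ (Submodule.subset_span ⟨(x, y), rfl⟩)
    have hconst : ∀ x : X, (⟪G x, g⟫ : ℝ) = ⟪G x₀, g⟫ := by
      intro x
      have := hdiff x x₀
      rw [inner_sub_left] at this
      linarith
    by_cases hc0 : (⟪G x₀, g⟫ : ℝ) = 0
    · have hgz : ∀ x : X, (⟪G x, g⟫ : ℝ) = 0 := fun x => by rw [hconst x, hc0]
      have hmem : g ∈ (Submodule.span ℝ (Set.range G))ᗮ := by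
        rw [Submodule.mem_orthogonal]
        intro v hv
        refine Submodule.span_induction (fun u hu => ?_) (inner_zero_left g)
          (fun u w _ _ hu hw => by rw [inner_add_left, hu, hw, add_zero])
          (fun a u _ hu => by rw [real_inner_smul_left, hu, mul_zero]) hv
        obtain ⟨x, rfl⟩ := hu
        exact hgz x
      have hGbot : (Submodule.span ℝ (Set.range G))ᗮ = ⊥ := by
        rwa [← Submodule.topologicalClosure_eq_top_iff]
      rw [hGbot] at hmem
      simpa using hmem
    · exact absurd ⟨(⟪G x₀, g⟫ : ℝ)⁻¹ • g, fun x => by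
        rw [real_inner_smul_right, hconst x, inv_mul_cancel₀ hc0]⟩ hone
  obtain ⟨E, hE⟩ := kernelEquiv_exists D k hDdense hKdense (fun p q => hker p q)
  refine ⟨fun g => E.symm g, fun g p => ?_, E.symm.bijective, fun g => E.symm.norm_map g⟩
  rw [← E.inner_map_map (k p) (E.symm g), E.apply_symm_apply, hE p]
  show (⟪G p.1 - G p.2, g⟫ : ℝ) = _
  rw [inner_sub_left]
end

section
/- Let G be a Mercer kernel on X whose RKHS H_G contains the constant function 1_X. Let I_G = span{1_X} and I_G^⊥ = {g ∈ H_G : ⟨g, 1_X⟩_G = 0}. Let K be the pairwise kernel K((x¹,x²),(x̂¹,x̂²)) = ⟨G_{x¹} − G_{x²}, G_{x̂¹} − G_{x̂²}⟩_G with RKHS H_K. Then the map ℑ : I_G^⊥ → H_K, ℑ(g)(x¹,x²) = g(x¹) − g(x²), is a bijection satisfying ‖ℑ(g)‖_K = ‖g‖_G. -/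
open scoped RealInnerProductSpace

lemma aux_dense_zero {E ι : Type*} [NormedAddCommGroup E] [InnerProductSpace ℝ E]
    [CompleteSpace E] (f : ι → E)
    (hd : (Submodule.span ℝ (Set.range f)).topologicalClosure = ⊤)
    (v : E) (hv : ∀ i, (⟪f i, v⟫ : ℝ) = 0) : v = 0 := by
  have h1 : (Submodule.span ℝ (Set.range f))ᗮ = ⊥ :=
    Submodule.topologicalClosure_eq_top_iff.mp hd
  have hm : v ∈ (Submodule.span ℝ (Set.range f))ᗮ := by
    rw [Submodule.mem_orthogonal]
    intro u hu
    induction hu using Submodule.span_induction with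
    | mem x hx => obtain ⟨i, rfl⟩ := hx; exact hv i
    | zero => simp
    | add x y _ _ hx hy => rw [inner_add_left, hx, hy, add_zero]
    | smul a x _ hx => rw [real_inner_smul_left, hx, mul_zero]
  rw [h1] at hm
  simpa using hm

/-- RKHSs are modeled abstractly as in the companion statement: `HG` with feature map
`G : X → HG` (dense kernel sections, `g` represents `x ↦ ⟪G x, g⟫`), `HK` with feature
map `k : X × X → HK` for the pairwise kernel. Here the constant function `1_X` belongs
to `H_G` and is represented by `c` (i.e. `⟪G x, c⟫ = 1` for all `x`); `ℑ` is defined on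
the orthogonal complement `I_G^⊥ = {g : ⟪g, c⟫ = 0}` of `span{1_X}`. -/
theorem stmt7 {X HG HK : Type*}
    [NormedAddCommGroup HG] [InnerProductSpace ℝ HG] [CompleteSpace HG]
    [NormedAddCommGroup HK] [InnerProductSpace ℝ HK] [CompleteSpace HK]
    (G : X → HG) (k : X × X → HK)
    (hGdense : (Submodule.span ℝ (Set.range G)).topologicalClosure = ⊤)
    (hKdense : (Submodule.span ℝ (Set.range k)).topologicalClosure = ⊤)
    (hker : ∀ p q : X × X, (⟪k p, k q⟫ : ℝ) = ⟪G p.1 - G p.2, G q.1 - G q.2⟫)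
    (c : HG) (hc : ∀ x : X, (⟪G x, c⟫ : ℝ) = 1) :
    ∃ ℑ : {g : HG // (⟪g, c⟫ : ℝ) = 0} → HK,
      (∀ (g : {g : HG // (⟪g, c⟫ : ℝ) = 0}) (p : X × X),
          (⟪k p, ℑ g⟫ : ℝ) = ⟪G p.1, (g : HG)⟫ - ⟪G p.2, (g : HG)⟫) ∧
        Function.Bijective ℑ ∧ ∀ g : {g : HG // (⟪g, c⟫ : ℝ) = 0}, ‖ℑ g‖ = ‖(g : HG)‖ := by
  classical
  rcases isEmpty_or_nonempty X with hX | hX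
  · -- trivial case: `X` empty, both spaces are zero
    have hHG : ∀ v : HG, v = 0 := by
      intro v
      have h0 : Set.range G = ∅ := Set.range_eq_empty G
      rw [h0, Submodule.span_empty] at hGdense
      have hb : (⊥ : Submodule ℝ HG).topologicalClosure = ⊥ :=
        IsClosed.submodule_topologicalClosure_eq isClosed_singleton
      rw [hb] at hGdense
      have : v ∈ (⊥ : Submodule ℝ HG) := hGdense ▸ Submodule.mem_top
      simpa using this
    have hHK : ∀ v : HK, v = 0 := by
      intro v
      have h0 : Set.range k = ∅ := Set.range_eq_empty k
      rw [h0, Submodule.span_empty] at hKdense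
      have hb : (⊥ : Submodule ℝ HK).topologicalClosure = ⊥ :=
        IsClosed.submodule_topologicalClosure_eq isClosed_singleton
      rw [hb] at hKdense
      have : v ∈ (⊥ : Submodule ℝ HK) := hKdense ▸ Submodule.mem_top
      simpa using this
    refine ⟨fun _ => 0, fun g p => (hX.elim p.1), ⟨fun a b _ => ?_, fun u => ?_⟩, fun g => ?_⟩
    · ext1; rw [hHG a.1, hHG b.1]
    · exact ⟨⟨0, by simp⟩, (hHK u).symm⟩
    · rw [hHG g.1]; simp
  -- main case
  set F : ((X × X) →₀ ℝ) →ₗ[ℝ] HK := Finsupp.linearCombination ℝ k with hF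
  set D : ((X × X) →₀ ℝ) →ₗ[ℝ] HG :=
    Finsupp.linearCombination ℝ (fun p : X × X => G p.1 - G p.2) with hD
  -- key bilinear identity
  have key : ∀ a b : (X × X) →₀ ℝ, (⟪F a, F b⟫ : ℝ) = ⟪D a, D b⟫ := by
    intro a b
    rw [hF, hD]
    rw [Finsupp.linearCombination_apply, Finsupp.linearCombination_apply,
      Finsupp.linearCombination_apply, Finsupp.linearCombination_apply,
      Finsupp.sum, Finsupp.sum, Finsupp.sum, Finsupp.sum, sum_inner, sum_inner]
    refine Finset.sum_congr rfl fun p _ => ?_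
    rw [inner_sum, inner_sum]
    refine Finset.sum_congr rfl fun q _ => ?_
    rw [real_inner_smul_left, real_inner_smul_left, real_inner_smul_right,
      real_inner_smul_right, hker]
  have hnorm : ∀ a : (X × X) →₀ ℝ, ‖F a‖ = ‖D a‖ := by
    intro a
    rw [norm_eq_sqrt_real_inner, norm_eq_sqrt_real_inner, key]
  have hkerle : LinearMap.ker F ≤ LinearMap.ker D := by
    intro a ha
    rw [LinearMap.mem_ker] at ha ⊢
    have : ‖D a‖ = 0 := by rw [← hnorm, ha, norm_zero]
    exact norm_eq_zero.mp this
  -- the isometric map on the span of the kernel sections k p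
  set S : Submodule ℝ HK := LinearMap.range F with hS
  have hrange : S = Submodule.span ℝ (Set.range k) := Finsupp.range_linearCombination ℝ
  set Φ₀ : S →ₗ[ℝ] HG :=
    (LinearMap.ker F).liftQ D hkerle ∘ₗ (LinearMap.quotKerEquivRange F).symm.toLinearMap
    with hΦ₀
  have hΦ₀F : ∀ a : (X × X) →₀ ℝ, ∀ h, Φ₀ ⟨F a, h⟩ = D a := by
    intro a h
    rw [hΦ₀]
    simp only [LinearMap.coe_comp, Function.comp_apply, LinearEquiv.coe_coe]
    rw [LinearMap.quotKerEquivRange_symm_apply_image]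
    simp [Submodule.mkQ_apply]
  have hΦ₀iso : ∀ v : S, ‖Φ₀ v‖ = ‖v‖ := by
    rintro ⟨v, hv⟩
    obtain ⟨a, rfl⟩ := hv
    refine (congrArg norm (hΦ₀F a _)).trans ?_
    rw [← hnorm]
    rfl
  set Φ₀' : S →ₗᵢ[ℝ] HG := ⟨Φ₀, hΦ₀iso⟩ with hΦ₀'
  have hdset : Dense (S : Set HK) := Submodule.dense_iff_topologicalClosure_eq_top.mpr
    (by rw [hrange]; exact hKdense)
  have hdense : DenseRange (S.subtypeL) := by
    simpa [DenseRange, Subtype.range_coe] using hdset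
  -- extend by continuity to all of HK
  set Φc : HK →L[ℝ] HG :=
    Φ₀'.toContinuousLinearMap.extend S.subtypeL with hΦc
  have hΦe : ∀ v : S, Φc v = Φ₀ v := fun v =>
    ContinuousLinearMap.extend_eq _ hdense isUniformEmbedding_subtype_val.isUniformInducing v
  have hΦiso : ∀ u : HK, ‖Φc u‖ = ‖u‖ := by
    have heq := Continuous.ext_on hdset (by continuity : Continuous fun u : HK => ‖Φc u‖)
      continuous_norm (fun u hu => by
        have : Φc u = Φ₀ ⟨u, hu⟩ := hΦe ⟨u, hu⟩
        rw [this, hΦ₀iso]; rfl)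
    exact fun u => congrFun heq u
  set Φ : HK →ₗᵢ[ℝ] HG := ⟨Φc.toLinearMap, hΦiso⟩ with hΦdef
  have hΦapp : ∀ u, Φ u = Φc u := fun u => rfl
  have hΦk : ∀ p : X × X, Φ (k p) = G p.1 - G p.2 := by
    intro p
    have h1 : F (Finsupp.single p 1) = k p := by
      rw [hF]; simpa using Finsupp.linearCombination_single ℝ (v := k) 1 p
    have hm : k p ∈ S := ⟨Finsupp.single p 1, h1⟩
    have h2 : Φc (k p) = Φ₀ ⟨k p, hm⟩ := hΦe ⟨k p, hm⟩
    rw [hΦapp, h2]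
    have h3 := hΦ₀F (Finsupp.single p 1) (h1 ▸ hm)
    simp only [h1] at h3
    rw [h3, hD]
    simpa using Finsupp.linearCombination_single ℝ
      (v := fun p : X × X => G p.1 - G p.2) 1 p
  -- inner product preservation
  have hΦinner : ∀ u v : HK, (⟪Φ u, Φ v⟫ : ℝ) = ⟪u, v⟫ := fun u v => Φ.inner_map_map u v
  -- the range of Φ is orthogonal to c
  have hΦc0 : ∀ u : HK, (⟪Φ u, c⟫ : ℝ) = 0 := by
    have hEq : Set.EqOn (fun u : HK => (⟪Φc u, c⟫ : ℝ)) (fun _ => (0 : ℝ)) (S : Set HK) := by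
      intro u hu
      obtain ⟨a, rfl⟩ := hu
      have h2 : Φc (F a) = Φ₀ ⟨F a, ⟨a, rfl⟩⟩ := hΦe ⟨F a, ⟨a, rfl⟩⟩
      show (⟪Φc (F a), c⟫ : ℝ) = 0
      rw [h2.trans (hΦ₀F a _), hD, Finsupp.linearCombination_apply, Finsupp.sum, sum_inner]
      refine Finset.sum_eq_zero fun p _ => ?_
      rw [real_inner_smul_left, inner_sub_left, hc, hc]
      ring
    have heq := Continuous.ext_on hdset
      (Continuous.inner Φc.continuous continuous_const) continuous_const hEq
    exact fun u => congrFun heq u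
  -- identify the range of Φ with the orthogonal complement of c
  obtain ⟨x0⟩ := hX
  set R : Submodule ℝ HG := LinearMap.range Φ.toLinearMap with hR
  have hRclosed : IsClosed (R : Set HG) := by
    have : IsClosed (Set.range Φ) := Φ.isometry.isClosedEmbedding.isClosed_range
    simpa [hR, LinearMap.coe_range] using this
  have : CompleteSpace R := hRclosed.completeSpace_coe
  have hRorth : Rᗮ = Submodule.span ℝ {c} := by
    apply le_antisymm
    · intro v hv
      rw [Submodule.mem_orthogonal] at hv
      have hGv : ∀ x y : X, (⟪G x - G y, v⟫ : ℝ) = 0 := by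
        intro x y
        have := hv (Φ (k (x, y))) ⟨k (x, y), rfl⟩
        rwa [hΦk (x, y)] at this
      have hvt : v - (⟪G x0, v⟫ : ℝ) • c = 0 := by
        apply aux_dense_zero G hGdense
        intro x
        rw [inner_sub_right, real_inner_smul_right, hc x, mul_one]
        have := hGv x x0
        rw [inner_sub_left] at this
        linarith
      have hv' : v = (⟪G x0, v⟫ : ℝ) • c := by rw [← sub_eq_zero]; exact hvt
      rw [hv']
      exact Submodule.smul_mem _ _ (Submodule.mem_span_singleton_self c)
    · intro v hv
      obtain ⟨t, rfl⟩ := Submodule.mem_span_singleton.mp hv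
      rw [Submodule.mem_orthogonal]
      rintro w ⟨u, rfl⟩
      rw [real_inner_smul_right]
      have h0 : (⟪Φ.toLinearMap u, c⟫ : ℝ) = 0 := hΦc0 u
      rw [h0, mul_zero]
  have hsurj : ∀ g : HG, (⟪g, c⟫ : ℝ) = 0 → ∃ u : HK, Φ u = g := by
    intro g hg
    have hgR : g ∈ R := by
      rw [← Submodule.orthogonal_orthogonal R, Submodule.mem_orthogonal, hRorth]
      intro v hv
      obtain ⟨t, rfl⟩ := Submodule.mem_span_singleton.mp hv
      rw [real_inner_smul_left, real_inner_comm, hg, mul_zero]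
    exact hgR
  -- define ℑ as the inverse of Φ on the orthogonal complement of c
  set ℑ : {g : HG // (⟪g, c⟫ : ℝ) = 0} → HK :=
    fun g => Classical.choose (hsurj g.1 g.2) with hℑ
  have hℑΦ : ∀ g : {g : HG // (⟪g, c⟫ : ℝ) = 0}, Φ (ℑ g) = g.1 :=
    fun g => Classical.choose_spec (hsurj g.1 g.2)
  refine ⟨ℑ, fun g p => ?_, ⟨fun a b hab => ?_, fun u => ?_⟩, fun g => ?_⟩
  · have h1 : (⟪k p, ℑ g⟫ : ℝ) = ⟪Φ (k p), Φ (ℑ g)⟫ := (hΦinner _ _).symm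
    rw [h1, hΦk p, hℑΦ g, inner_sub_left]
  · have : a.1 = b.1 := by rw [← hℑΦ a, ← hℑΦ b, hab]
    exact Subtype.ext this
  · refine ⟨⟨Φ u, hΦc0 u⟩, ?_⟩
    apply Φ.injective
    exact hℑΦ ⟨Φ u, hΦc0 u⟩
  · rw [← hℑΦ g]
    exact (Φ.norm_map (ℑ g)).symm
end
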